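/- arXiv:2311.07610 — 2 statements merged into one kernel-verified Lean document; each statement's English description precedes it below -/
import Mathlib

section
/- For every positive integer n and integer t, ∑_{k=1}^{n} (-1)^{k-1}·(k/(n+k))·C(n+k, n-k)·F_{2k+t} equals 0 if n ≡ 0 (mod 5); equals (-1)^{⌊n/5⌋}·F_{t+2}/2 if n ≡ 1 or 4 (mod 5); and equals (-1)^{⌊n/5⌋+1}·F_{t+1}/2 if n ≡ 2 or 3 (mod 5). -/
open Finset Real

/-- Fibonacci numbers extended to integer indices. -/
def fibZ (n : ℤ) : ℤ :=
  if 0 ≤ n then (Nat.fib n.toNat : ℤ)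
  else (-1) ^ ((-n).toNat + 1) * (Nat.fib (-n).toNat : ℤ)

/-- Lucas numbers on natural indices. -/
def lucasNat : ℕ → ℤ
  | 0 => 2
  | 1 => 1
  | n + 2 => lucasNat (n + 1) + lucasNat n

/-- Lucas numbers extended to integer indices. -/
def lucasZ (n : ℤ) : ℤ :=
  if 0 ≤ n then lucasNat n.toNat
  else (-1) ^ (-n).toNat * lucasNat (-n).toNat

noncomputable def gold : ℝ := (1 + Real.sqrt 5) / 2
noncomputable def gold' : ℝ := (1 - Real.sqrt 5) / 2

set_option maxHeartbeats 1000000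


lemma fibZ_neg (j : ℕ) : fibZ (-(j:ℤ)) = (-1)^(j+1) * Nat.fib j := by
  rcases Nat.eq_zero_or_pos j with h | h
  · subst h; simp [fibZ]
  · rw [fibZ, if_neg (by omega)]
    simp

lemma fibZ_ofNat (j : ℕ) : fibZ (j:ℤ) = Nat.fib j := by
  rw [fibZ, if_pos (by positivity)]; simp

lemma fibZ_add_two (m : ℤ) : fibZ (m+2) = fibZ (m+1) + fibZ m := by
  rcases le_or_gt 0 m with h | h
  · obtain ⟨j, rfl⟩ := Int.eq_ofNat_of_zero_le h
    rw [show (j:ℤ)+2 = ((j+2:ℕ):ℤ) by push_cast; ring,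
      show (j:ℤ)+1 = ((j+1:ℕ):ℤ) by push_cast; ring,
      fibZ_ofNat, fibZ_ofNat, fibZ_ofNat, Nat.fib_add_two]
    push_cast; ring
  · obtain ⟨j, rfl⟩ : ∃ j : ℕ, m = -(j:ℤ) := ⟨(-m).toNat, by omega⟩
    have hj : 1 ≤ j := by omega
    rcases Nat.lt_or_ge j 3 with h3 | h3
    · interval_cases j <;> norm_num [fibZ_neg, fibZ_ofNat, show (-1:ℤ)+1 = 0 by ring,
        show (-2:ℤ)+2 = 0 by ring, show (-2:ℤ)+1 = -1 by ring, show (-1:ℤ)+2 = (1:ℕ) by norm_num]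
      <;> simp [fibZ]
    · obtain ⟨i, rfl⟩ : ∃ i : ℕ, j = i + 3 := ⟨j - 3, by omega⟩
      rw [show -(↑(i+3):ℤ)+2 = -((i+1:ℕ):ℤ) by push_cast; ring,
        show -(↑(i+3):ℤ)+1 = -((i+2:ℕ):ℤ) by push_cast; ring,
        fibZ_neg, fibZ_neg, fibZ_neg]
      have hf : (Nat.fib (i+3) : ℤ) = 2*(Nat.fib (i+1):ℤ) + (Nat.fib i : ℤ) := by
        rw [show i+3 = (i+1)+2 by ring, Nat.fib_add_two, show i+1+1 = i+2 by ring,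
          Nat.fib_add_two]
        push_cast; ring
      have hf2 : (Nat.fib (i+2) : ℤ) = (Nat.fib (i+1):ℤ) + (Nat.fib i : ℤ) := by
        rw [Nat.fib_add_two]; push_cast; ring
      push_cast [pow_succ] at hf hf2 ⊢
      linear_combination ((-1:ℤ))^i * (hf2 - hf)


lemma key (n k : ℕ) (hk : k ≤ n+1) :
    ((k:ℝ)+1)/((n:ℝ)+3+k) * ((n+3+k).choose (2*k+2) : ℝ)
      + ((k:ℝ)+1)/((n:ℝ)+1+k) * ((n+1+k).choose (2*k+2) : ℝ)
    = 2*(((k:ℝ)+1)/((n:ℝ)+2+k)) * ((n+2+k).choose (2*k+2) : ℝ)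
      + ((k:ℝ)/((n:ℝ)+1+k)) * ((n+1+k).choose (2*k) : ℝ) := by
  rcases Nat.lt_or_ge k n with hkn | hkn
  · -- general case k < n
    set m := n + 1 + k with hm
    have hklt : (k:ℝ) < n := by exact_mod_cast hkn
    have h1 : (m.choose (2*k+2) : ℝ) * (2*(k:ℝ)+2) = (m.choose (2*k+1) : ℝ) * ((n:ℝ) - k) := by
      have h0 := Nat.choose_succ_right_eq m (2*k+1)
      have hsub : m - (2*k+1) = n - k := by omega
      rw [hsub] at h0
      have h' := congrArg (fun x : ℕ => (x:ℝ)) h0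
      simp only [Nat.cast_mul] at h'
      rw [Nat.cast_sub hkn.le] at h'
      push_cast at h'
      linarith [h']
    have h2 : (m.choose (2*k+1) : ℝ) * (2*(k:ℝ)+1) = (m.choose (2*k) : ℝ) * ((n:ℝ)+1-k) := by
      have h0 := Nat.choose_succ_right_eq m (2*k)
      have hsub : m - (2*k) = n + 1 - k := by omega
      rw [hsub] at h0
      have h' := congrArg (fun x : ℕ => (x:ℝ)) h0
      simp only [Nat.cast_mul] at h'
      rw [Nat.cast_sub (by omega : k ≤ n+1)] at h'
      push_cast at h'
      linarith [h']
    have p1 : (n+2+k).choose (2*k+2) = m.choose (2*k+1) + m.choose (2*k+2) := by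
      rw [show n+2+k = m+1 by omega, show 2*k+2 = (2*k+1)+1 by ring, Nat.choose_succ_succ]
    have p2 : (n+3+k).choose (2*k+2) = m.choose (2*k) + 2 * m.choose (2*k+1) + m.choose (2*k+2) := by
      rw [show n+3+k = (m+1)+1 by omega, show 2*k+2 = (2*k+1)+1 by ring, Nat.choose_succ_succ,
        show (m+1).choose (2*k+1) = m.choose (2*k) + m.choose (2*k+1) by
          rw [show 2*k+1 = (2*k)+1 by ring, Nat.choose_succ_succ],
        Nat.choose_succ_succ]
      ring
    have q1 : ((n+2+k).choose (2*k+2) : ℝ)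
        = (m.choose (2*k+1) : ℝ) + (m.choose (2*k+2) : ℝ) := by
      rw [p1]; push_cast; ring
    have q2 : ((n+3+k).choose (2*k+2) : ℝ)
        = (m.choose (2*k) : ℝ) + 2*(m.choose (2*k+1) : ℝ) + (m.choose (2*k+2) : ℝ) := by
      rw [p2]; push_cast; ring
    rw [q1, q2]
    generalize hga : (m.choose (2*k+2) : ℝ) = a at h1 ⊢
    generalize hgb : (m.choose (2*k+1) : ℝ) = b at h1 h2 ⊢
    generalize hgc : (m.choose (2*k) : ℝ) = c at h2 ⊢
    have hne1 : (n:ℝ)+1-k ≠ 0 := by nlinarith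
    have ha2 : a = b * ((n:ℝ)-k) / (2*(k:ℝ)+2) := by
      field_simp
      linarith [h1]
    have hc2 : c = b * (2*(k:ℝ)+1) / ((n:ℝ)+1-k) := by
      field_simp
      linarith [h2]
    rw [ha2, hc2]
    have hk0 : (0:ℝ) < (k:ℝ) + 1 := by positivity
    have d0 : (0:ℝ) < (n:ℝ)+1+k := by positivity
    have d1 : (0:ℝ) < (n:ℝ)+2+k := by positivity
    have d2 : (0:ℝ) < (n:ℝ)+3+k := by positivity
    field_simp
    ring
  · -- boundary cases k = n or k = n+1
    have h : k = n ∨ k = n+1 := by omega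
    rcases h with rfl | rfl
    · rw [show k+3+k = 2*k+3 by ring, show k+1+k = 2*k+1 by ring, show k+2+k = 2*k+2 by ring]
      rw [show (2*k+1).choose (2*k+2) = 0 from Nat.choose_eq_zero_of_lt (by omega),
        Nat.choose_self, show (2*k+3).choose (2*k+2) = 2*k+3 by
          rw [show 2*k+3 = (2*k+2)+1 by ring, Nat.choose_succ_self_right],
        show (2*k+1).choose (2*k) = 2*k+1 by
          rw [show 2*k+1 = (2*k)+1 by ring, Nat.choose_succ_self_right]]
      push_cast
      have e1 : ((k:ℝ)+3+k) ≠ 0 := by positivity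
      have e2 : ((k:ℝ)+1+k) ≠ 0 := by positivity
      have e3 : ((k:ℝ)+2+k) ≠ 0 := by positivity
      field_simp
      ring
    · rw [show n+3+(n+1) = 2*n+4 by ring, show n+1+(n+1) = 2*n+2 by ring,
        show n+2+(n+1) = 2*n+3 by ring, show 2*(n+1)+2 = 2*n+4 by ring,
        show 2*(n+1) = 2*n+2 by ring]
      rw [Nat.choose_self, Nat.choose_self,
        show (2*n+2).choose (2*n+4) = 0 from Nat.choose_eq_zero_of_lt (by omega),
        show (2*n+3).choose (2*n+4) = 0 from Nat.choose_eq_zero_of_lt (by omega)]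
      push_cast
      have e1 : ((n:ℝ)+3+(n+1)) ≠ 0 := by positivity
      have e2 : ((n:ℝ)+1+(n+1)) ≠ 0 := by positivity
      field_simp
      ring




noncomputable def SS (n : ℕ) (t : ℤ) : ℝ :=
  ∑ j ∈ Finset.range n,
    (-1:ℝ)^j * (((j:ℝ)+1)/((n:ℝ)+j+1)) * ((n+j+1).choose (2*j+2) : ℝ)
      * (fibZ (2*(j:ℤ)+2+t) : ℝ)

lemma SS_shift (n : ℕ) (t : ℤ) : SS n (t+2) = SS n (t+1) + SS n t := by
  rw [SS, SS, SS, ← Finset.sum_add_distrib]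
  refine Finset.sum_congr rfl fun j _ => ?_
  have h := fibZ_add_two (2*(j:ℤ)+2+t)
  rw [show 2*(j:ℤ)+2+(t+2) = 2*(j:ℤ)+2+t+2 by ring, h,
    show 2*(j:ℤ)+2+(t+1) = 2*(j:ℤ)+2+t+1 by ring]
  push_cast
  ring

lemma rec1 (n : ℕ) (t : ℤ) :
    SS (n+2) t = 2 * SS (n+1) t - SS n t - SS (n+1) (t+2) := by
  have e1 : SS (n+1) t = ∑ j ∈ Finset.range (n+2),
      (-1:ℝ)^j * (((j:ℝ)+1)/(((n+1:ℕ):ℝ)+j+1)) * (((n+1)+j+1).choose (2*j+2) : ℝ)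
        * (fibZ (2*(j:ℤ)+2+t) : ℝ) := by
    rw [SS, Finset.sum_range_succ (fun j => (-1:ℝ)^j * (((j:ℝ)+1)/(((n+1:ℕ):ℝ)+j+1))
        * (((n+1)+j+1).choose (2*j+2) : ℝ) * (fibZ (2*(j:ℤ)+2+t) : ℝ)) (n+1),
      show ((n+1)+(n+1)+1).choose (2*(n+1)+2) = 0 from Nat.choose_eq_zero_of_lt (by omega)]
    norm_num
  have e0 : SS n t = ∑ j ∈ Finset.range (n+2),
      (-1:ℝ)^j * (((j:ℝ)+1)/((n:ℝ)+j+1)) * ((n+j+1).choose (2*j+2) : ℝ)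
        * (fibZ (2*(j:ℤ)+2+t) : ℝ) := by
    rw [SS, Finset.sum_range_succ (fun j => (-1:ℝ)^j * (((j:ℝ)+1)/((n:ℝ)+j+1))
        * ((n+j+1).choose (2*j+2) : ℝ) * (fibZ (2*(j:ℤ)+2+t) : ℝ)) (n+1),
      Finset.sum_range_succ (fun j => (-1:ℝ)^j * (((j:ℝ)+1)/((n:ℝ)+j+1))
        * ((n+j+1).choose (2*j+2) : ℝ) * (fibZ (2*(j:ℤ)+2+t) : ℝ)) n,
      show (n+n+1).choose (2*n+2) = 0 from Nat.choose_eq_zero_of_lt (by omega),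
      show (n+(n+1)+1).choose (2*(n+1)+2) = 0 from Nat.choose_eq_zero_of_lt (by omega)]
    norm_num
  have e2 : SS (n+1) (t+2) = - ∑ j ∈ Finset.range (n+2),
      (-1:ℝ)^j * ((j:ℝ)/((n:ℝ)+1+j)) * ((n+1+j).choose (2*j) : ℝ)
        * (fibZ (2*(j:ℤ)+2+t) : ℝ) := by
    rw [SS, Finset.sum_range_succ' (fun j => (-1:ℝ)^j * ((j:ℝ)/((n:ℝ)+1+j))
      * ((n+1+j).choose (2*j) : ℝ) * (fibZ (2*(j:ℤ)+2+t) : ℝ)) (n+1)]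
    norm_num
    rw [← Finset.sum_neg_distrib]
    refine Finset.sum_congr rfl fun j _ => ?_
    rw [show 2*((j:ℤ)+1)+2+t = 2*(j:ℤ)+2+(t+2) by ring]
    push_cast
    ring
  rw [e1, e0, e2, SS]
  rw [Finset.mul_sum, ← Finset.sum_sub_distrib, sub_neg_eq_add, ← Finset.sum_add_distrib]
  refine Finset.sum_congr rfl fun j hj => ?_
  have hjn : j ≤ n + 1 := by
    have := Finset.mem_range.mp hj; omega
  have hk := key n j hjn
  rw [show n+2+j+1 = n+3+j by omega, show n+1+j+1 = n+2+j by omega,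
    show n+j+1 = n+1+j by omega] at *
  push_cast
  linear_combination ((-1:ℝ)^j * (fibZ (2*(j:ℤ)+2+t) : ℝ)) * hk





lemma rec1' (m : ℕ) (s : ℤ) : SS (m+2) s = SS (m+1) s - SS (m+1) (s+1) - SS m s := by
  have h1 := rec1 m s
  have h2 := SS_shift (m+1) s
  linarith

lemma step5 (n : ℕ) (t : ℤ) : SS (n+5) t = - SS n t := by
  have r3 := rec1' (n+3) t
  have r2 := rec1' (n+2) t
  have r2' := rec1' (n+2) (t+1)
  have s3 := SS_shift (n+3) t
  have r1 := rec1' (n+1) t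
  have r1' := rec1' (n+1) (t+1)
  have s2 := SS_shift (n+2) t
  have r0 := rec1' n t
  have h54 : n+4+1 = n+5 := by norm_num
  have h43 : n+3+1 = n+4 := by norm_num
  have h32 : n+2+1 = n+3 := by norm_num
  have h21 : n+1+1 = n+2 := by norm_num
  rw [show n+3+2 = n+5 by omega, h43] at r3
  rw [show n+2+2 = n+4 by omega, h32] at r2 r2'
  rw [show n+1+2 = n+3 by omega, h21] at r1 r1'
  rw [show t+1+1 = t+2 by ring] at r1' r2'
  linarith


lemma base1 (t : ℤ) : SS 1 t = (fibZ (t+2) : ℝ) / 2 := by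
  rw [SS]
  simp [Finset.sum_range_succ]
  rw [show 2+t = t+2 by ring]
  norm_num
  ring

lemma base2 (t : ℤ) : SS 2 t = -(fibZ (t+1) : ℝ) / 2 := by
  have h3 : fibZ (t+3) = fibZ (t+2) + fibZ (t+1) := by
    rw [show t+3 = t+1+2 by ring, show t+2 = t+1+1 by ring]; exact fibZ_add_two (t+1)
  have h4 : fibZ (t+4) = fibZ (t+3) + fibZ (t+2) := by
    rw [show t+4 = t+2+2 by ring, show t+3 = t+2+1 by ring]; exact fibZ_add_two (t+2)
  have h5 : fibZ (t+5) = fibZ (t+4) + fibZ (t+3) := by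
    rw [show t+5 = t+3+2 by ring, show t+4 = t+3+1 by ring]; exact fibZ_add_two (t+3)
  have h6 : fibZ (t+6) = fibZ (t+5) + fibZ (t+4) := by
    rw [show t+6 = t+4+2 by ring, show t+5 = t+4+1 by ring]; exact fibZ_add_two (t+4)
  have h7 : fibZ (t+7) = fibZ (t+6) + fibZ (t+5) := by
    rw [show t+7 = t+5+2 by ring, show t+6 = t+5+1 by ring]; exact fibZ_add_two (t+5)
  have h8 : fibZ (t+8) = fibZ (t+7) + fibZ (t+6) := by
    rw [show t+8 = t+6+2 by ring, show t+7 = t+6+1 by ring]; exact fibZ_add_two (t+6)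
  have h9 : fibZ (t+9) = fibZ (t+8) + fibZ (t+7) := by
    rw [show t+9 = t+7+2 by ring, show t+8 = t+7+1 by ring]; exact fibZ_add_two (t+7)
  have h10 : fibZ (t+10) = fibZ (t+9) + fibZ (t+8) := by
    rw [show t+10 = t+8+2 by ring, show t+9 = t+8+1 by ring]; exact fibZ_add_two (t+8)
  rw [SS]
  simp [Finset.sum_range_succ]
  rw [show (4:ℤ)+t = t+4 by ring, h4, h3]
  push_cast
  ring

lemma base3 (t : ℤ) : SS 3 t = -(fibZ (t+1) : ℝ) / 2 := by
  have h3 : fibZ (t+3) = fibZ (t+2) + fibZ (t+1) := by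
    rw [show t+3 = t+1+2 by ring, show t+2 = t+1+1 by ring]; exact fibZ_add_two (t+1)
  have h4 : fibZ (t+4) = fibZ (t+3) + fibZ (t+2) := by
    rw [show t+4 = t+2+2 by ring, show t+3 = t+2+1 by ring]; exact fibZ_add_two (t+2)
  have h5 : fibZ (t+5) = fibZ (t+4) + fibZ (t+3) := by
    rw [show t+5 = t+3+2 by ring, show t+4 = t+3+1 by ring]; exact fibZ_add_two (t+3)
  have h6 : fibZ (t+6) = fibZ (t+5) + fibZ (t+4) := by
    rw [show t+6 = t+4+2 by ring, show t+5 = t+4+1 by ring]; exact fibZ_add_two (t+4)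
  have h7 : fibZ (t+7) = fibZ (t+6) + fibZ (t+5) := by
    rw [show t+7 = t+5+2 by ring, show t+6 = t+5+1 by ring]; exact fibZ_add_two (t+5)
  have h8 : fibZ (t+8) = fibZ (t+7) + fibZ (t+6) := by
    rw [show t+8 = t+6+2 by ring, show t+7 = t+6+1 by ring]; exact fibZ_add_two (t+6)
  have h9 : fibZ (t+9) = fibZ (t+8) + fibZ (t+7) := by
    rw [show t+9 = t+7+2 by ring, show t+8 = t+7+1 by ring]; exact fibZ_add_two (t+7)
  have h10 : fibZ (t+10) = fibZ (t+9) + fibZ (t+8) := by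
    rw [show t+10 = t+8+2 by ring, show t+9 = t+8+1 by ring]; exact fibZ_add_two (t+8)
  rw [SS]
  simp [Finset.sum_range_succ]
  rw [show Nat.choose 4 2 = 6 from rfl,
    show (4:ℤ)+t = t+4 by ring, show (6:ℤ)+t = t+6 by ring, h6, h5, h4, h3]
  push_cast
  ring

lemma base4 (t : ℤ) : SS 4 t = (fibZ (t+2) : ℝ) / 2 := by
  have h3 : fibZ (t+3) = fibZ (t+2) + fibZ (t+1) := by
    rw [show t+3 = t+1+2 by ring, show t+2 = t+1+1 by ring]; exact fibZ_add_two (t+1)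
  have h4 : fibZ (t+4) = fibZ (t+3) + fibZ (t+2) := by
    rw [show t+4 = t+2+2 by ring, show t+3 = t+2+1 by ring]; exact fibZ_add_two (t+2)
  have h5 : fibZ (t+5) = fibZ (t+4) + fibZ (t+3) := by
    rw [show t+5 = t+3+2 by ring, show t+4 = t+3+1 by ring]; exact fibZ_add_two (t+3)
  have h6 : fibZ (t+6) = fibZ (t+5) + fibZ (t+4) := by
    rw [show t+6 = t+4+2 by ring, show t+5 = t+4+1 by ring]; exact fibZ_add_two (t+4)
  have h7 : fibZ (t+7) = fibZ (t+6) + fibZ (t+5) := by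
    rw [show t+7 = t+5+2 by ring, show t+6 = t+5+1 by ring]; exact fibZ_add_two (t+5)
  have h8 : fibZ (t+8) = fibZ (t+7) + fibZ (t+6) := by
    rw [show t+8 = t+6+2 by ring, show t+7 = t+6+1 by ring]; exact fibZ_add_two (t+6)
  have h9 : fibZ (t+9) = fibZ (t+8) + fibZ (t+7) := by
    rw [show t+9 = t+7+2 by ring, show t+8 = t+7+1 by ring]; exact fibZ_add_two (t+7)
  have h10 : fibZ (t+10) = fibZ (t+9) + fibZ (t+8) := by
    rw [show t+10 = t+8+2 by ring, show t+9 = t+8+1 by ring]; exact fibZ_add_two (t+8)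
  rw [SS]
  simp [Finset.sum_range_succ]
  rw [show Nat.choose 5 2 = 10 from rfl, show Nat.choose 6 4 = 15 from rfl,
    show (4:ℤ)+t = t+4 by ring, show (6:ℤ)+t = t+6 by ring, show (8:ℤ)+t = t+8 by ring,
    h8, h7, h6, h5, h4, h3]
  push_cast
  ring

lemma base5 (t : ℤ) : SS 5 t = 0 := by
  have h3 : fibZ (t+3) = fibZ (t+2) + fibZ (t+1) := by
    rw [show t+3 = t+1+2 by ring, show t+2 = t+1+1 by ring]; exact fibZ_add_two (t+1)
  have h4 : fibZ (t+4) = fibZ (t+3) + fibZ (t+2) := by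
    rw [show t+4 = t+2+2 by ring, show t+3 = t+2+1 by ring]; exact fibZ_add_two (t+2)
  have h5 : fibZ (t+5) = fibZ (t+4) + fibZ (t+3) := by
    rw [show t+5 = t+3+2 by ring, show t+4 = t+3+1 by ring]; exact fibZ_add_two (t+3)
  have h6 : fibZ (t+6) = fibZ (t+5) + fibZ (t+4) := by
    rw [show t+6 = t+4+2 by ring, show t+5 = t+4+1 by ring]; exact fibZ_add_two (t+4)
  have h7 : fibZ (t+7) = fibZ (t+6) + fibZ (t+5) := by
    rw [show t+7 = t+5+2 by ring, show t+6 = t+5+1 by ring]; exact fibZ_add_two (t+5)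
  have h8 : fibZ (t+8) = fibZ (t+7) + fibZ (t+6) := by
    rw [show t+8 = t+6+2 by ring, show t+7 = t+6+1 by ring]; exact fibZ_add_two (t+6)
  have h9 : fibZ (t+9) = fibZ (t+8) + fibZ (t+7) := by
    rw [show t+9 = t+7+2 by ring, show t+8 = t+7+1 by ring]; exact fibZ_add_two (t+7)
  have h10 : fibZ (t+10) = fibZ (t+9) + fibZ (t+8) := by
    rw [show t+10 = t+8+2 by ring, show t+9 = t+8+1 by ring]; exact fibZ_add_two (t+8)
  rw [SS]
  simp [Finset.sum_range_succ]
  rw [show Nat.choose 6 2 = 15 from rfl, show Nat.choose 7 4 = 35 from rfl,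
    show Nat.choose 8 6 = 28 from rfl,
    show (4:ℤ)+t = t+4 by ring, show (6:ℤ)+t = t+6 by ring, show (8:ℤ)+t = t+8 by ring,
    show (10:ℤ)+t = t+10 by ring,
    h10, h9, h8, h7, h6, h5, h4, h3]
  push_cast
  ring



noncomputable def RHS (n : ℕ) (t : ℤ) : ℝ :=
  if n % 5 = 0 then 0
  else if n % 5 = 1 ∨ n % 5 = 4 then (-1 : ℝ) ^ (n / 5) * (fibZ (t + 2) : ℝ) / 2
  else (-1 : ℝ) ^ (n / 5 + 1) * (fibZ (t + 1) : ℝ) / 2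

lemma flipRHS (m : ℕ) (t : ℤ) : RHS (m+5) t = - RHS m t := by
  have e1 : (m+5) % 5 = m % 5 := by omega
  have e2 : (m+5)/5 = m/5 + 1 := by omega
  rw [RHS, RHS, e1, e2]
  by_cases h0 : m % 5 = 0
  · simp [h0]
  · rw [if_neg h0, if_neg h0]
    by_cases h1 : m % 5 = 1 ∨ m % 5 = 4
    · rw [if_pos h1, if_pos h1, pow_succ]; ring
    · rw [if_neg h1, if_neg h1, pow_succ]; ring

lemma mainSS : ∀ n, 1 ≤ n → ∀ t, SS n t = RHS n t := by
  intro n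
  induction n using Nat.strong_induction_on with
  | _ n ih =>
    intro hn t
    rcases lt_or_ge n 6 with h | h
    · interval_cases n
      · rw [base1, RHS]; norm_num
      · rw [base2, RHS]; norm_num
      · rw [base3, RHS]; norm_num
      · rw [base4, RHS]; norm_num
      · rw [base5, RHS]; norm_num
    · obtain ⟨m, rfl⟩ : ∃ m, n = m + 5 := ⟨n-5, by omega⟩
      rw [step5, ih m (by omega) (by omega) t, flipRHS]

lemma conv (n : ℕ) (t : ℤ) :
    ∑ k ∈ Finset.Icc 1 n,
        (-1 : ℝ) ^ (k - 1) * ((k : ℝ) / ((n : ℝ) + (k : ℝ))) * (Nat.choose (n + k) (n - k) : ℝ) *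
          (fibZ (2 * k + t) : ℝ) = SS n t := by
  rw [← Finset.Ico_add_one_right_eq_Icc, Finset.sum_Ico_eq_sum_range, SS]
  norm_num
  refine Finset.sum_congr rfl fun j hj => ?_
  have hjn : j + 1 ≤ n := by
    have := Finset.mem_range.mp hj; omega
  have c1 : n + (1+j) = n + j + 1 := by omega
  have c2 : n - (1+j) = (n+j+1) - (2*j+2) := by omega
  have c3 : (n+j+1).choose ((n+j+1) - (2*j+2)) = (n+j+1).choose (2*j+2) :=
    Nat.choose_symm (by omega)
  rw [c1, c2, c3, show (2*(1+(j:ℤ))+t) = 2*(j:ℤ)+2+t by ring]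
  ring

theorem stmt15 (n : ℕ) (hn : 0 < n) (t : ℤ) :
    ∑ k ∈ Finset.Icc 1 n,
        (-1 : ℝ) ^ (k - 1) * ((k : ℝ) / ((n : ℝ) + (k : ℝ))) * (Nat.choose (n + k) (n - k) : ℝ) *
          (fibZ (2 * k + t) : ℝ) =
      if n % 5 = 0 then 0
      else if n % 5 = 1 ∨ n % 5 = 4 then (-1 : ℝ) ^ (n / 5) * (fibZ (t + 2) : ℝ) / 2
      else (-1 : ℝ) ^ (n / 5 + 1) * (fibZ (t + 1) : ℝ) / 2 := by
  rw [conv n t, mainSS n hn t, RHS]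
end

section
/- For every positive integer n and integer t, ∑_{k=1}^{n} (-1)^{k-1}·(k/(n+k))·C(n+k, n-k)·L_{2k+t} equals 0 if n ≡ 0 (mod 5); equals (-1)^{⌊n/5⌋}·L_{t+2}/2 if n ≡ 1 or 4 (mod 5); and equals (-1)^{⌊n/5⌋+1}·L_{t+1}/2 if n ≡ 2 or 3 (mod 5). -/
open Finset Real

lemma lucasZ_rec (s : ℤ) : lucasZ (s + 2) = lucasZ (s + 1) + lucasZ s := by
  rcases le_or_gt 0 s with h | h
  · have h2 : (s + 2).toNat = s.toNat + 2 := by omega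
    have h1 : (s + 1).toNat = s.toNat + 1 := by omega
    simp only [lucasZ, if_pos (by omega : (0:ℤ) ≤ s + 2), if_pos (by omega : (0:ℤ) ≤ s + 1),
      if_pos h, h1, h2]
    simp [lucasNat]
  · rcases eq_or_lt_of_le (show s ≤ -1 by omega) with h1 | h1
    · subst h1; decide
    · rcases eq_or_lt_of_le (show s ≤ -2 by omega) with h2 | h2
      · subst h2; decide
      · obtain ⟨p, hp⟩ : ∃ p : ℕ, (-s).toNat = p + 3 := ⟨(-s).toNat - 3, by omega⟩
        have e2 : (-(s + 2)).toNat = p + 1 := by omega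
        have e1 : (-(s + 1)).toNat = p + 2 := by omega
        simp only [lucasZ, if_neg (show ¬ (0:ℤ) ≤ s + 2 by omega),
          if_neg (show ¬ (0:ℤ) ≤ s + 1 by omega), if_neg (show ¬ (0:ℤ) ≤ s by omega),
          e1, e2, hp]
        have : lucasNat (p + 3) = lucasNat (p + 2) + lucasNat (p + 1) := rfl
        rw [this]; ring

def Tsum (n : ℕ) (t : ℤ) : ℤ :=
  ∑ k ∈ Finset.range n, (-1 : ℤ) ^ k * (Nat.choose (n + k) (2 * k + 1) : ℤ) *
    lucasZ (2 * (k : ℤ) + 2 + t)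

lemma choose_key (n m : ℕ) :
    Nat.choose (n + m + 3) (2 * m + 3) + Nat.choose (n + m + 1) (2 * m + 3)
      = 2 * Nat.choose (n + m + 2) (2 * m + 3) + Nat.choose (n + m + 1) (2 * m + 1) := by
  have p1 : Nat.choose (n + m + 3) (2 * m + 3)
      = Nat.choose (n + m + 2) (2 * m + 2) + Nat.choose (n + m + 2) (2 * m + 3) :=
    Nat.choose_succ_succ' (n + m + 2) (2 * m + 2)
  have p2 : Nat.choose (n + m + 2) (2 * m + 2)
      = Nat.choose (n + m + 1) (2 * m + 1) + Nat.choose (n + m + 1) (2 * m + 2) :=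
    Nat.choose_succ_succ' (n + m + 1) (2 * m + 1)
  have p3 : Nat.choose (n + m + 2) (2 * m + 3)
      = Nat.choose (n + m + 1) (2 * m + 2) + Nat.choose (n + m + 1) (2 * m + 3) :=
    Nat.choose_succ_succ' (n + m + 1) (2 * m + 2)
  omega

lemma Trec (n : ℕ) (t : ℤ) :
    Tsum (n + 2) t = 2 * Tsum (n + 1) t - Tsum (n + 1) (t + 2) - Tsum n t := by
  have hb : Tsum (n + 1) t = ∑ k ∈ range (n + 2),
      (-1 : ℤ) ^ k * (Nat.choose (n + 1 + k) (2 * k + 1) : ℤ) * lucasZ (2 * (k : ℤ) + 2 + t) := by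
    unfold Tsum
    symm
    rw [Finset.sum_range_succ, Nat.choose_eq_zero_of_lt (by omega)]
    simp
  have hd : Tsum n t = ∑ k ∈ range (n + 2),
      (-1 : ℤ) ^ k * (Nat.choose (n + k) (2 * k + 1) : ℤ) * lucasZ (2 * (k : ℤ) + 2 + t) := by
    unfold Tsum
    symm
    rw [Finset.sum_range_succ, Nat.choose_eq_zero_of_lt (by omega),
      Finset.sum_range_succ, Nat.choose_eq_zero_of_lt (by omega)]
    simp
  have hh : Tsum (n + 1) (t + 2) = lucasZ (2 + t) - ∑ j ∈ range (n + 2),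
      (-1 : ℤ) ^ j * (Nat.choose (n + j) (2 * j - 1) : ℤ) * lucasZ (2 * (j : ℤ) + 2 + t) := by
    have e1 : ∑ j ∈ range (n + 2),
        (-1 : ℤ) ^ j * (Nat.choose (n + j) (2 * j - 1) : ℤ) * lucasZ (2 * (j : ℤ) + 2 + t)
        = (∑ k ∈ range (n + 1),
            (-1 : ℤ) ^ (k+1) * (Nat.choose (n + (k+1)) (2 * (k+1) - 1) : ℤ) *
              lucasZ (2 * ((k+1 : ℕ) : ℤ) + 2 + t)) + lucasZ (2 + t) := by
      rw [Finset.sum_range_succ' (fun j => (-1 : ℤ) ^ j * (Nat.choose (n + j) (2 * j - 1) : ℤ) *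
        lucasZ (2 * (j : ℤ) + 2 + t)) (n+1)]
      push_cast
      norm_num
    have e2 : Tsum (n + 1) (t + 2) = -∑ k ∈ range (n + 1),
        (-1 : ℤ) ^ (k+1) * (Nat.choose (n + (k+1)) (2 * (k+1) - 1) : ℤ) *
          lucasZ (2 * ((k+1 : ℕ) : ℤ) + 2 + t) := by
      unfold Tsum
      rw [← Finset.sum_neg_distrib]
      apply Finset.sum_congr rfl
      intro k _
      have harg : 2 * (k:ℤ) + 2 + (t + 2) = 2 * ((k+1:ℕ):ℤ) + 2 + t := by push_cast; ring
      have hch : 2 * (k+1) - 1 = 2 * k + 1 := by omega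
      have hnn : n + (k+1) = n + 1 + k := by omega
      rw [harg, hch, hnn]
      ring
    rw [e2]
    omega
  have ha : Tsum (n + 2) t = ∑ k ∈ range (n + 2),
      (-1 : ℤ) ^ k * (Nat.choose (n + 2 + k) (2 * k + 1) : ℤ) * lucasZ (2 * (k : ℤ) + 2 + t) := rfl
  rw [ha, hb, hd, hh]
  have key : ∑ k ∈ range (n + 2),
      (2 * ((-1 : ℤ) ^ k * (Nat.choose (n + 1 + k) (2 * k + 1) : ℤ) * lucasZ (2 * (k : ℤ) + 2 + t))
        + (-1 : ℤ) ^ k * (Nat.choose (n + k) (2 * k - 1) : ℤ) * lucasZ (2 * (k : ℤ) + 2 + t)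
        - (-1 : ℤ) ^ k * (Nat.choose (n + k) (2 * k + 1) : ℤ) * lucasZ (2 * (k : ℤ) + 2 + t)
        - (-1 : ℤ) ^ k * (Nat.choose (n + 2 + k) (2 * k + 1) : ℤ) * lucasZ (2 * (k : ℤ) + 2 + t))
      = lucasZ (2 + t) := by
    rw [Finset.sum_range_succ' (fun k =>
      (2 * ((-1 : ℤ) ^ k * (Nat.choose (n + 1 + k) (2 * k + 1) : ℤ) * lucasZ (2 * (k : ℤ) + 2 + t))
        + (-1 : ℤ) ^ k * (Nat.choose (n + k) (2 * k - 1) : ℤ) * lucasZ (2 * (k : ℤ) + 2 + t)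
        - (-1 : ℤ) ^ k * (Nat.choose (n + k) (2 * k + 1) : ℤ) * lucasZ (2 * (k : ℤ) + 2 + t)
        - (-1 : ℤ) ^ k * (Nat.choose (n + 2 + k) (2 * k + 1) : ℤ) * lucasZ (2 * (k : ℤ) + 2 + t)))
      (n+1)]
    have hz : ∀ k ∈ range (n + 1),
        (2 * ((-1 : ℤ) ^ (k+1) * (Nat.choose (n + 1 + (k+1)) (2 * (k+1) + 1) : ℤ) *
            lucasZ (2 * ((k+1 : ℕ) : ℤ) + 2 + t))
          + (-1 : ℤ) ^ (k+1) * (Nat.choose (n + (k+1)) (2 * (k+1) - 1) : ℤ) *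
            lucasZ (2 * ((k+1 : ℕ) : ℤ) + 2 + t)
          - (-1 : ℤ) ^ (k+1) * (Nat.choose (n + (k+1)) (2 * (k+1) + 1) : ℤ) *
            lucasZ (2 * ((k+1 : ℕ) : ℤ) + 2 + t)
          - (-1 : ℤ) ^ (k+1) * (Nat.choose (n + 2 + (k+1)) (2 * (k+1) + 1) : ℤ) *
            lucasZ (2 * ((k+1 : ℕ) : ℤ) + 2 + t)) = 0 := by
      intro k _
      have hc := choose_key n k
      have hc' : (Nat.choose (n + k + 3) (2 * k + 3) : ℤ) + Nat.choose (n + k + 1) (2 * k + 3)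
          = 2 * Nat.choose (n + k + 2) (2 * k + 3) + Nat.choose (n + k + 1) (2 * k + 1) := by
        exact_mod_cast hc
      have r1 : n + 1 + (k+1) = n + k + 2 := by omega
      have r2 : 2 * (k+1) + 1 = 2 * k + 3 := by omega
      have r3 : n + (k+1) = n + k + 1 := by omega
      have r4 : 2 * (k+1) - 1 = 2 * k + 1 := by omega
      have r5 : n + 2 + (k+1) = n + k + 3 := by omega
      rw [r1, r2, r3, r4, r5]
      push_cast
      linear_combination (((-1 : ℤ) ^ k) * lucasZ (2 * ((k:ℤ) + 1) + 2 + t)) * hc'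
    rw [Finset.sum_congr rfl hz]
    simp [Nat.choose_one_right]
    ring
  have hsplit : ∑ k ∈ range (n + 2),
      (2 * ((-1 : ℤ) ^ k * (Nat.choose (n + 1 + k) (2 * k + 1) : ℤ) * lucasZ (2 * (k : ℤ) + 2 + t))
        + (-1 : ℤ) ^ k * (Nat.choose (n + k) (2 * k - 1) : ℤ) * lucasZ (2 * (k : ℤ) + 2 + t)
        - (-1 : ℤ) ^ k * (Nat.choose (n + k) (2 * k + 1) : ℤ) * lucasZ (2 * (k : ℤ) + 2 + t)
        - (-1 : ℤ) ^ k * (Nat.choose (n + 2 + k) (2 * k + 1) : ℤ) * lucasZ (2 * (k : ℤ) + 2 + t))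
      = 2 * (∑ k ∈ range (n + 2),
            (-1 : ℤ) ^ k * (Nat.choose (n + 1 + k) (2 * k + 1) : ℤ) * lucasZ (2 * (k : ℤ) + 2 + t))
        + (∑ k ∈ range (n + 2),
            (-1 : ℤ) ^ k * (Nat.choose (n + k) (2 * k - 1) : ℤ) * lucasZ (2 * (k : ℤ) + 2 + t))
        - (∑ k ∈ range (n + 2),
            (-1 : ℤ) ^ k * (Nat.choose (n + k) (2 * k + 1) : ℤ) * lucasZ (2 * (k : ℤ) + 2 + t))
        - (∑ k ∈ range (n + 2),
            (-1 : ℤ) ^ k * (Nat.choose (n + 2 + k) (2 * k + 1) : ℤ) * lucasZ (2 * (k : ℤ) + 2 + t)) := by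
    simp only [Finset.sum_sub_distrib, Finset.sum_add_distrib, ← Finset.mul_sum]
  rw [hsplit] at key
  linarith [key]

def Rfun (n : ℕ) (t : ℤ) : ℤ :=
  match n % 10 with
  | 0 => 0
  | 1 => lucasZ (t + 2)
  | 2 => -lucasZ (t + 1)
  | 3 => -lucasZ (t + 1)
  | 4 => lucasZ (t + 2)
  | 5 => 0
  | 6 => -lucasZ (t + 2)
  | 7 => lucasZ (t + 1)
  | 8 => lucasZ (t + 1)
  | _ => -lucasZ (t + 2)

lemma Rrec (n : ℕ) (t : ℤ) :
    Rfun (n + 2) t = 2 * Rfun (n + 1) t - Rfun (n + 1) (t + 2) - Rfun n t := by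
  have l1 := lucasZ_rec t          -- lucasZ (t+2) = lucasZ (t+1) + lucasZ t
  have l2 := lucasZ_rec (t + 1)    -- lucasZ (t+1+2) = lucasZ (t+1+1) + lucasZ (t+1)
  have l3 := lucasZ_rec (t + 2)    -- lucasZ (t+2+2) = lucasZ (t+2+1) + lucasZ (t+2)
  rw [show t + 1 + 2 = t + 2 + 1 by ring, show t + 1 + 1 = t + 2 by ring] at l2
  have h10 : n % 10 < 10 := Nat.mod_lt _ (by norm_num)
  interval_cases h : n % 10 <;>
    [skip; skip; skip; skip; skip; skip; skip; skip; skip; skip] <;>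
  · have h1 : (n + 1) % 10 = (n % 10 + 1) % 10 := by omega
    have h2 : (n + 2) % 10 = (n % 10 + 2) % 10 := by omega
    rw [h] at h1 h2
    norm_num at h1 h2
    simp only [Rfun, h, h1, h2]
    linarith [l1, l2, l3]

lemma T1 (t : ℤ) : Tsum 1 t = lucasZ (t + 2) := by
  simp [Tsum]
  rw [show 2 + t = t + 2 by ring]

lemma T2 (t : ℤ) : Tsum 2 t = -lucasZ (t + 1) := by
  have : Tsum 2 t = 2 * lucasZ (t + 2) - lucasZ (t + 4) := by
    simp [Tsum, Finset.sum_range_succ]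
    rw [show 2 + t = t + 2 by ring, show (4:ℤ) + t = t + 4 by ring]
    ring
  rw [this]
  have l1 := lucasZ_rec t
  have l2 := lucasZ_rec (t + 1)
  have l3 := lucasZ_rec (t + 2)
  rw [show t + 1 + 2 = t + 3 by ring, show t + 1 + 1 = t + 2 by ring] at l2
  rw [show t + 2 + 2 = t + 4 by ring, show t + 2 + 1 = t + 3 by ring] at l3
  linarith

lemma TeqR : ∀ n, ∀ t, Tsum (n + 1) t = Rfun (n + 1) t ∧ Tsum (n + 2) t = Rfun (n + 2) t := by
  intro n
  induction n with
  | zero =>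
      intro t
      constructor
      · rw [T1]; rfl
      · rw [T2]; rfl
  | succ m ih =>
      intro t
      refine ⟨(ih t).2, ?_⟩
      rw [show m + 1 + 2 = m + 1 + 2 from rfl]
      rw [Trec (m + 1) t, Rrec (m + 1) t, (ih t).1, (ih t).2, (ih (t + 2)).2]

theorem stmt16 (n : ℕ) (hn : 0 < n) (t : ℤ) :
    ∑ k ∈ Finset.Icc 1 n,
        (-1 : ℝ) ^ (k - 1) * ((k : ℝ) / ((n : ℝ) + (k : ℝ))) * (Nat.choose (n + k) (n - k) : ℝ) *
          (lucasZ (2 * k + t) : ℝ) =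
      if n % 5 = 0 then 0
      else if n % 5 = 1 ∨ n % 5 = 4 then (-1 : ℝ) ^ (n / 5) * (lucasZ (t + 2) : ℝ) / 2
      else (-1 : ℝ) ^ (n / 5 + 1) * (lucasZ (t + 1) : ℝ) / 2 := by
  have hstep1 : ∑ k ∈ Finset.Icc 1 n,
      (-1 : ℝ) ^ (k - 1) * ((k : ℝ) / ((n : ℝ) + (k : ℝ))) * (Nat.choose (n + k) (n - k) : ℝ) *
        (lucasZ (2 * k + t) : ℝ) = (Tsum n t : ℝ) / 2 := by
    rw [← Finset.Ico_add_one_right_eq_Icc, Finset.sum_Ico_eq_sum_range]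
    rw [show n + 1 - 1 = n from rfl]
    rw [Tsum]
    push_cast
    rw [Finset.sum_div]
    apply Finset.sum_congr rfl
    intro i hi
    rw [Finset.mem_range] at hi
    have h1 : 1 + i - 1 = i := by omega
    have h2 : Nat.choose (n + (1 + i)) (n - (1 + i)) = Nat.choose (n + (1 + i)) (2 * i + 2) := by
      rw [← Nat.choose_symm (show n - (1 + i) ≤ n + (1 + i) by omega),
        show n + (1 + i) - (n - (1 + i)) = 2 * i + 2 by omega]
    have h3 : (2 * (1 + (i:ℤ)) + t) = 2 * (i : ℤ) + 2 + t := by ring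
    rw [h1, h2, h3]
    have hN : (n + i + 1) * Nat.choose (n + i) (2 * i + 1)
        = Nat.choose (n + i + 1) (2 * i + 2) * (2 * i + 2) := by
      have := Nat.add_one_mul_choose_eq (n + i) (2 * i + 1)
      simpa [Nat.succ_eq_add_one] using this
    have hNR : ((n : ℝ) + i + 1) * (Nat.choose (n + i) (2 * i + 1) : ℝ)
        = (Nat.choose (n + i + 1) (2 * i + 2) : ℝ) * (2 * (i : ℝ) + 2) := by
      exact_mod_cast hN
    have h4 : n + (1 + i) = n + i + 1 := by omega
    rw [h4]
    have hne : ((n : ℝ) + (1 + (i : ℝ))) ≠ 0 := by positivity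
    have hkey : ((1 : ℝ) + (i : ℝ)) / ((n : ℝ) + (1 + (i : ℝ))) * (Nat.choose (n + i + 1) (2 * i + 2) : ℝ)
        = (Nat.choose (n + i) (2 * i + 1) : ℝ) / 2 := by
      rw [div_mul_eq_mul_div, div_eq_div_iff hne (by norm_num : (2:ℝ) ≠ 0)]
      linear_combination (-1 : ℝ) * hNR
    linear_combination ((-1 : ℝ) ^ i * (lucasZ (2 * (i : ℤ) + 2 + t) : ℝ)) * hkey
  rw [hstep1]
  have hTR : Tsum n t = Rfun n t := by
    obtain ⟨m, rfl⟩ : ∃ m, n = m + 1 := ⟨n - 1, by omega⟩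
    exact (TeqR m t).1
  rw [hTR]
  have h10 : n % 10 < 10 := Nat.mod_lt _ (by norm_num)
  interval_cases h : n % 10
  · rw [if_pos (show n % 5 = 0 by omega)]
    norm_num [Rfun, h]
  · rw [if_neg (by omega), if_pos (Or.inl (show n % 5 = 1 by omega)),
      (Nat.even_iff.mpr (show n / 5 % 2 = 0 by omega)).neg_one_pow]
    norm_num [Rfun, h]
  · rw [if_neg (by omega), if_neg (by omega),
      ((Nat.even_iff.mpr (show n / 5 % 2 = 0 by omega)).add_one).neg_one_pow]
    norm_num [Rfun, h]
  · rw [if_neg (by omega), if_neg (by omega),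
      ((Nat.even_iff.mpr (show n / 5 % 2 = 0 by omega)).add_one).neg_one_pow]
    norm_num [Rfun, h]
  · rw [if_neg (by omega), if_pos (Or.inr (show n % 5 = 4 by omega)),
      (Nat.even_iff.mpr (show n / 5 % 2 = 0 by omega)).neg_one_pow]
    norm_num [Rfun, h]
  · rw [if_pos (show n % 5 = 0 by omega)]
    norm_num [Rfun, h]
  · rw [if_neg (by omega), if_pos (Or.inl (show n % 5 = 1 by omega)),
      (Nat.odd_iff.mpr (show n / 5 % 2 = 1 by omega)).neg_one_pow]
    norm_num [Rfun, h]
  · rw [if_neg (by omega), if_neg (by omega),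
      ((Nat.odd_iff.mpr (show n / 5 % 2 = 1 by omega)).add_one).neg_one_pow]
    norm_num [Rfun, h]
  · rw [if_neg (by omega), if_neg (by omega),
      ((Nat.odd_iff.mpr (show n / 5 % 2 = 1 by omega)).add_one).neg_one_pow]
    norm_num [Rfun, h]
  · rw [if_neg (by omega), if_pos (Or.inr (show n % 5 = 4 by omega)),
      (Nat.odd_iff.mpr (show n / 5 % 2 = 1 by omega)).neg_one_pow]
    norm_num [Rfun, h]
end
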